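/- For the two-community SBM mean matrix with equal communities: let u ∈ ℝⁿ with uᵢ = 1/√n for i in C₁ and uᵢ = -1/√n for i in C₂ (|C₁| = |C₂| = n/2), and β = (p-q)/(p+q) with p > q > 0. Then the mean transition matrix P̄ = (1/n)𝟙𝟙ᵀ + β uuᵀ satisfies: the equation π̄ = αP̄π̄ + (1-α)v with probability vector v has the unique solution π̄ = (α/n)𝟙 + (1-α)(v + (αβ/(1-αβ))(uᵀv)u). -/

import Mathlib

open Matrix Finset

theorem sbm_mean_pagerank {n : ℕ}
    (C₁ C₂ : Finset (Fin n)) (hdisj : Disjoint C₁ C₂)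
    (hunion : C₁ ∪ C₂ = Finset.univ)
    (hcard₁ : C₁.card = n / 2) (hcard₂ : C₂.card = n / 2) (hn : Even n) (hn0 : 0 < n)
    (p q : ℝ) (hq : 0 < q) (hpq : q < p) (hp : p ≤ 1)
    (u : Fin n → ℝ)
    (hu : u = fun i => if i ∈ C₁ then (Real.sqrt n)⁻¹ else -(Real.sqrt n)⁻¹)
    (β : ℝ) (hβ : β = (p - q) / (p + q))
    (α : ℝ) (hα0 : 0 < α) (hα1 : α < 1)
    (v : Fin n → ℝ) (hvnn : ∀ i, 0 ≤ v i) (hvsum : ∑ i, v i = 1)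
    (Pbar : Matrix (Fin n) (Fin n) ℝ)
    (hPbar : Pbar = (n : ℝ)⁻¹ • vecMulVec (fun _ => 1) (fun _ => 1) + β • vecMulVec u u) :
    ∀ πbar : Fin n → ℝ,
      πbar = α • Pbar.mulVec πbar + (1 - α) • v ↔
      πbar = (α / n) • (fun _ => (1 : ℝ)) +
        (1 - α) • (v + (α * β / (1 - α * β)) • (dotProduct u v) • u) := by
  intro πbar
  have hnR : (0 : ℝ) < n := by exact_mod_cast hn0
  have hnne : (n : ℝ) ≠ 0 := ne_of_gt hnR
  have hs2 : Real.sqrt n * Real.sqrt n = n := Real.mul_self_sqrt (le_of_lt hnR)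
  -- β bounds
  have hβ0 : 0 < β := by rw [hβ]; apply div_pos <;> linarith
  have hβ1 : β < 1 := by
    rw [hβ, div_lt_one (by linarith)]; linarith
  have hαβ : 1 - α * β ≠ 0 := by
    have : α * β < 1 := by
      calc α * β < 1 * 1 := by
            apply mul_lt_mul'' hα1 hβ1 (le_of_lt hα0) (le_of_lt hβ0)
        _ = 1 := by ring
    linarith
  have h1α : (1 : ℝ) - α ≠ 0 := by linarith
  -- sums of u
  have hC₂ : ∀ i ∈ C₂, u i = -(Real.sqrt n)⁻¹ := by
    intro i hi
    have : i ∉ C₁ := fun h => (Finset.disjoint_left.mp hdisj) h hi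
    simp [hu, this]
  have hC₁ : ∀ i ∈ C₁, u i = (Real.sqrt n)⁻¹ := by
    intro i hi; simp [hu, hi]
  have hsumu : ∑ i, u i = 0 := by
    rw [← hunion, Finset.sum_union hdisj,
      Finset.sum_congr rfl hC₁, Finset.sum_congr rfl hC₂]
    simp [hcard₁, hcard₂]
  have hsumuu : ∑ i, u i * u i = 1 := by
    have huu : ∀ i : Fin n, u i * u i = (n : ℝ)⁻¹ := by
      intro i
      have h : u i * u i = (Real.sqrt n)⁻¹ * (Real.sqrt n)⁻¹ := by
        by_cases h : i ∈ C₁ <;> simp [hu, h]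
      rw [h, ← mul_inv, hs2]
    rw [Finset.sum_congr rfl (fun i _ => huu i)]
    simp [Finset.card_univ, hnne]
  set D := dotProduct u v with hD
  have hDdef : D = ∑ j, u j * v j := rfl
  -- linearity helpers
  have key1 : ∀ a b c : ℝ, ∑ j, (a + b * u j + c * v j) = a * n + c := by
    intro a b c
    rw [Finset.sum_add_distrib, Finset.sum_add_distrib, ← Finset.mul_sum, ← Finset.mul_sum,
      hsumu, hvsum]
    simp [Finset.card_univ, mul_comm]
  have key2 : ∀ a b c : ℝ, ∑ j, u j * (a + b * u j + c * v j) = b + c * D := by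
    intro a b c
    rw [Finset.sum_congr rfl (fun j _ => by ring :
      ∀ j ∈ Finset.univ, u j * (a + b * u j + c * v j)
        = a * u j + b * (u j * u j) + c * (u j * v j))]
    rw [Finset.sum_add_distrib, Finset.sum_add_distrib, ← Finset.mul_sum, ← Finset.mul_sum,
      ← Finset.mul_sum, hsumu, hsumuu, ← hDdef]
    ring
  -- mulVec formula
  have hmul : ∀ x : Fin n → ℝ, ∀ i, Pbar.mulVec x i
      = (n : ℝ)⁻¹ * (∑ j, x j) + β * u i * (∑ j, u j * x j) := by
    intro x i
    simp only [hPbar, Matrix.mulVec, dotProduct, Matrix.add_apply, Matrix.smul_apply,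
      Matrix.vecMulVec_apply, smul_eq_mul]
    rw [Finset.sum_congr rfl (fun j _ => by ring :
      ∀ j ∈ Finset.univ, ((n : ℝ)⁻¹ * (1 * 1) + β * (u i * u j)) * x j
        = (n : ℝ)⁻¹ * x j + (β * u i) * (u j * x j))]
    rw [Finset.sum_add_distrib, ← Finset.mul_sum, ← Finset.mul_sum]
  constructor
  · intro heq
    set S := ∑ j, πbar j with hS
    set T := ∑ j, u j * πbar j with hT
    have hco : ∀ i, πbar i = (α * (n : ℝ)⁻¹ * S) + (α * β * T) * u i + (1 - α) * v i := by
      intro i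
      conv_lhs => rw [heq]
      simp only [Pi.add_apply, Pi.smul_apply, smul_eq_mul, hmul, ← hS, ← hT]
      ring
    have h1 : S = (α * (n : ℝ)⁻¹ * S) * n + (1 - α) :=
      calc S = ∑ j, ((α * (n : ℝ)⁻¹ * S) + (α * β * T) * u j + (1 - α) * v j) :=
            Finset.sum_congr rfl (fun j _ => hco j)
        _ = (α * (n : ℝ)⁻¹ * S) * n + (1 - α) := key1 _ _ _
    have hA : α * (n : ℝ)⁻¹ * S * n = α * S := by
      calc α * (n : ℝ)⁻¹ * S * n = α * S * ((n : ℝ)⁻¹ * n) := by ring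
        _ = α * S := by rw [inv_mul_cancel₀ hnne, mul_one]
    rw [hA] at h1
    have hS1 : S = 1 := mul_left_cancel₀ h1α (by linear_combination h1)
    have h2 : T = (α * β * T) + (1 - α) * D :=
      calc T = ∑ j, u j * ((α * (n : ℝ)⁻¹ * S) + (α * β * T) * u j + (1 - α) * v j) :=
            Finset.sum_congr rfl (fun j _ => by rw [← hco j])
        _ = (α * β * T) + (1 - α) * D := key2 _ _ _
    have hTval : T = (1 - α) * D / (1 - α * β) := by
      rw [eq_div_iff hαβ]
      linear_combination h2
    funext i
    rw [hco i, hS1, hTval]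
    simp only [Pi.add_apply, Pi.smul_apply, smul_eq_mul, ← hD]
    field_simp
    ring
  · intro heq
    have hco : ∀ i, πbar i = (α / n) + ((1 - α) * (α * β / (1 - α * β) * D)) * u i
        + (1 - α) * v i := by
      intro i; rw [heq]; simp only [Pi.add_apply, Pi.smul_apply, smul_eq_mul, ← hD]; ring
    have hS1 : (∑ j, πbar j) = 1 := by
      calc (∑ j, πbar j)
          = ∑ j, ((α / n) + ((1 - α) * (α * β / (1 - α * β) * D)) * u j + (1 - α) * v j) :=
            Finset.sum_congr rfl (fun j _ => hco j)
        _ = (α / n) * n + (1 - α) := key1 _ _ _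
        _ = 1 := by field_simp; ring
    have hTval : (∑ j, u j * πbar j) = (1 - α) * D / (1 - α * β) := by
      calc (∑ j, u j * πbar j)
          = ∑ j, u j * ((α / n) + ((1 - α) * (α * β / (1 - α * β) * D)) * u j
              + (1 - α) * v j) :=
            Finset.sum_congr rfl (fun j _ => by rw [← hco j])
        _ = ((1 - α) * (α * β / (1 - α * β) * D)) + (1 - α) * D := key2 _ _ _
        _ = (1 - α) * D / (1 - α * β) := by field_simp; ring
    funext i
    rw [hco i]
    simp only [Pi.add_apply, Pi.smul_apply, smul_eq_mul, hmul, hS1, hTval]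
    field_simp
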